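/- For v ∈ X let p_v ∈ Y satisfy A p_v q = B v q for all q ∈ Y, and define the energy norm ‖v‖_S := √(B v p_v) = ‖p_v‖_A. Then ‖·‖_S is equivalent to the norm of X: c₁ᴮ ‖v‖_X ≤ ‖v‖_S ≤ c₂ᴮ ‖v‖_X, i.e. (c₁ᴮ)² ‖v‖_X² ≤ B v p_v ≤ (c₂ᴮ)² ‖v‖_X². -/

import Mathlib

/-- Cauchy–Schwarz for a symmetric nonnegative bilinear form. -/
lemma cs_aux {Y : Type*} [NormedAddCommGroup Y] [InnerProductSpace ℝ Y]
    (A : Y →L[ℝ] Y →L[ℝ] ℝ) (hAsym : ∀ p q : Y, A p q = A q p)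
    (hnn : ∀ r : Y, 0 ≤ A r r) (p q : Y) :
    (A p q) ^ 2 ≤ A p p * A q q := by
  have hsym := hAsym p q
  rcases eq_or_lt_of_le (hnn q) with hb | hb
  · -- A q q = 0 : show A p q = 0
    have key : ∀ t : ℝ, 0 ≤ A p p - 2 * t * A p q := by
      intro t
      have h' := hnn (p - t • q)
      simp only [map_sub, map_smul, ContinuousLinearMap.sub_apply,
        ContinuousLinearMap.smul_apply, smul_eq_mul] at h'
      rw [← hAsym p q, ← hb] at h'
      ring_nf at h' ⊢
      linarith
    have hApq : A p q = 0 := by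
      by_contra hne
      have h1 := key ((A p p + 1) / (2 * A p q))
      have h2 : 2 * ((A p p + 1) / (2 * A p q)) * A p q = A p p + 1 := by
        field_simp
      linarith
    rw [hApq, ← hb]
    nlinarith [hnn p]
  · have h := hnn ((A q q) • p - (A p q) • q)
    simp only [map_sub, map_smul, ContinuousLinearMap.sub_apply,
      ContinuousLinearMap.smul_apply, smul_eq_mul] at h
    rw [← hsym] at h
    nlinarith [h, hb]

/-- the energy norm `‖v‖_S = √(B v p_v)` is equivalent to the
`X` norm: `(c₁ᴮ)² ‖v‖_X² ≤ B v p_v ≤ (c₂ᴮ)² ‖v‖_X²`. -/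
theorem stmt3
    {X Y : Type*} [NormedAddCommGroup X] [InnerProductSpace ℝ X] [CompleteSpace X]
    [NormedAddCommGroup Y] [InnerProductSpace ℝ Y] [CompleteSpace Y]
    (A : Y →L[ℝ] Y →L[ℝ] ℝ)
    (hAsym : ∀ p q : Y, A p q = A q p)
    (μ : ℝ) (hμ : 0 < μ) (hAcoer : ∀ q : Y, μ * ‖q‖ ^ 2 ≤ A q q)
    (B : X →L[ℝ] Y →L[ℝ] ℝ)
    (c₁B c₂B : ℝ) (hc₁B : 0 < c₁B) (hc₂B : 0 < c₂B)
    (hBbdd : ∀ (v : X) (q : Y), |B v q| ≤ c₂B * ‖v‖ * Real.sqrt (A q q))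
    (hBinfsup : ∀ v : X, c₁B * ‖v‖ ≤
      ⨆ q : {q : Y // q ≠ 0}, B v (q : Y) / Real.sqrt (A (q : Y) (q : Y)))
    (v : X) (p_v : Y) (hpv : ∀ q : Y, A p_v q = B v q) :
    c₁B ^ 2 * ‖v‖ ^ 2 ≤ B v p_v ∧ B v p_v ≤ c₂B ^ 2 * ‖v‖ ^ 2 := by
  have hnn : ∀ r : Y, 0 ≤ A r r := fun r =>
    le_trans (by positivity) (hAcoer r)
  have hBp : B v p_v = A p_v p_v := (hpv p_v).symm
  have hs2nn : 0 ≤ A p_v p_v := hnn p_v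
  set s : ℝ := Real.sqrt (A p_v p_v) with hs
  have hssq : s ^ 2 = A p_v p_v := Real.sq_sqrt hs2nn
  have hsnn : 0 ≤ s := Real.sqrt_nonneg _
  constructor
  · -- lower bound
    have hsup : (⨆ q : {q : Y // q ≠ 0}, B v (q : Y) / Real.sqrt (A (q : Y) (q : Y))) ≤ s := by
      apply Real.iSup_le _ hsnn
      rintro ⟨q, hq⟩
      have hqpos : 0 < A q q := by
        have hn : 0 < ‖q‖ := norm_pos_iff.mpr hq
        exact lt_of_lt_of_le (by positivity) (hAcoer q)
      have hsq : 0 < Real.sqrt (A q q) := Real.sqrt_pos.mpr hqpos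
      rw [div_le_iff₀ hsq]
      have hcs := cs_aux A hAsym hnn p_v q
      have hBq : B v q = A p_v q := (hpv q).symm
      rw [hBq]
      calc A p_v q ≤ |A p_v q| := le_abs_self _
      _ = Real.sqrt ((A p_v q) ^ 2) := (Real.sqrt_sq_eq_abs _).symm
      _ ≤ Real.sqrt (A p_v p_v * A q q) := Real.sqrt_le_sqrt hcs
      _ = s * Real.sqrt (A q q) := by rw [hs, Real.sqrt_mul hs2nn]
    have h := le_trans (hBinfsup v) hsup
    have hprod : (c₁B * ‖v‖) * (c₁B * ‖v‖) ≤ s * s :=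
      mul_le_mul h h (by positivity) hsnn
    rw [hBp, ← hssq]
    nlinarith [hprod]
  · -- upper bound
    have hb := hBbdd v p_v
    rw [← hpv p_v, ← hs] at hb
    have h1 : A p_v p_v ≤ c₂B * ‖v‖ * s := le_trans (le_abs_self _) hb
    rw [hBp, ← hssq] at *
    nlinarith [h1, hsnn, mul_nonneg hc₂B.le (norm_nonneg v), sq_nonneg (s - c₂B * ‖v‖)]
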